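/- If G and H are distance critical simple graphs, then their strong product G ⊠ H is distance critical; more precisely, every vertex of G ⊠ H admits a determining pair. -/

import Mathlib

/-- A graph is *distance critical* if for every vertex `v` there is a pair of vertices of
`G − v` whose distance in `G − v` differs from their distance in `G`
(distances are `ℕ∞`-valued, `⊤` when there is no connecting path). -/
def IsDistanceCritical {V : Type*} (G : SimpleGraph V) : Prop :=
  ∀ v : V, ∃ x y : ({v}ᶜ : Set V),
    (G.induce ({v}ᶜ : Set V)).edist x y ≠ G.edist (x : V) (y : V)

/-- `{a, b}` is a *determining pair* for `v` : `a` and `b` are distinct, nonadjacent,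
and `v` is their unique common neighbor. -/
def IsDeterminingPair {V : Type*} (G : SimpleGraph V) (v a b : V) : Prop :=
  a ≠ b ∧ ¬ G.Adj a b ∧ G.Adj a v ∧ G.Adj b v ∧
    ∀ w : V, G.Adj a w → G.Adj b w → w = v

/-- The strong product of two simple graphs. -/
def strongProd {α β : Type*} (G : SimpleGraph α) (H : SimpleGraph β) :
    SimpleGraph (α × β) where
  Adj p q := p ≠ q ∧ (p.1 = q.1 ∨ G.Adj p.1 q.1) ∧ (p.2 = q.2 ∨ H.Adj p.2 q.2)
  symm := ⟨fun p q ⟨hne, h1, h2⟩ =>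
    ⟨hne.symm, h1.imp Eq.symm (fun h => h.symm), h2.imp Eq.symm (fun h => h.symm)⟩⟩
  loopless := ⟨fun p ⟨hne, _, _⟩ => hne rfl⟩

open SimpleGraph

lemma walk_toInduce {V : Type*} {G : SimpleGraph V} {s : Set V} :
    ∀ {x y : V} (p : G.Walk x y) (hs : ∀ a ∈ p.support, a ∈ s),
      ∃ q : (G.induce s).Walk ⟨x, hs x p.start_mem_support⟩ ⟨y, hs y p.end_mem_support⟩,
        q.length = p.length := by
  intro x y p
  induction p with
  | nil => intro hs; exact ⟨.nil, rfl⟩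
  | @cons u b y h p ih =>
    intro hs
    have hs' : ∀ a ∈ p.support, a ∈ s := fun a ha => hs a (by simp [ha])
    obtain ⟨q, hq⟩ := ih hs'
    refine ⟨.cons (by simpa using h) q, by simp [hq]⟩

lemma edist_le_induce {V : Type*} {G : SimpleGraph V} {s : Set V} (x y : s) :
    G.edist (x : V) (y : V) ≤ (G.induce s).edist x y := by
  rcases eq_or_ne ((G.induce s).edist x y) ⊤ with h | h
  · simp [h]
  · obtain ⟨q, hq⟩ := exists_walk_of_edist_ne_top h
    calc G.edist (x : V) (y : V) ≤ (q.map (SimpleGraph.Embedding.induce s).toHom).length :=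
          edist_le _
      _ = (G.induce s).edist x y := by rw [Walk.length_map, hq]

lemma exists_det_pair {V : Type*} {G : SimpleGraph V} {v : V}
    (h : ∃ x y : ({v}ᶜ : Set V),
      (G.induce ({v}ᶜ : Set V)).edist x y ≠ G.edist (x : V) (y : V)) :
    ∃ a b, IsDeterminingPair G v a b := by
  classical
  obtain ⟨x, y, hne⟩ := h
  have hlt : G.edist (x : V) (y : V) < (G.induce ({v}ᶜ : Set V)).edist x y :=
    lt_of_le_of_ne (edist_le_induce x y) (Ne.symm hne)
  have htop : G.edist (x : V) (y : V) ≠ ⊤ := fun ht => by simp [ht] at hlt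
  obtain ⟨p0, hp0⟩ := exists_walk_of_edist_ne_top htop
  -- replace by a path of at most the same length
  set p := p0.bypass with hpdef
  have hpath : p.IsPath := p0.bypass_isPath
  have hlen : (p.length : ℕ∞) = G.edist (x : V) (y : V) := by
    have h1 : G.edist (x : V) (y : V) ≤ p.length := edist_le _
    have h2 : (p.length : ℕ∞) ≤ (p0.length : ℕ∞) := by
      exact_mod_cast p0.length_bypass_le
    exact le_antisymm (h2.trans hp0.le) h1
  -- v must lie on p
  have hv : v ∈ p.support := by
    by_contra hv
    have hs : ∀ a ∈ p.support, a ∈ ({v}ᶜ : Set V) := fun a ha hav => hv (hav ▸ ha)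
    obtain ⟨q, hq⟩ := walk_toInduce p hs
    have : (G.induce ({v}ᶜ : Set V)).edist x y ≤ p.length := by
      have := edist_le q
      rwa [hq] at this
    exact absurd (this.trans_lt (hlen ▸ hlt)) (lt_irrefl _)
  -- decompose p at v
  have hxv : (x : V) ≠ v := x.2
  have hyv : (y : V) ≠ v := y.2
  set t := p.takeUntil v hv with htdef
  set d := p.dropUntil v hv with hddef
  have hspec : t.append d = p := p.take_spec hv
  have ht : t.IsPath := hpath.takeUntil hv
  have hd : d.IsPath := hpath.dropUntil hv
  obtain ⟨a, hva, r, hr⟩ := (Walk.not_nil_iff).mp (Walk.not_nil_of_ne (Ne.symm hxv) :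
      ¬ t.reverse.Nil)
  obtain ⟨b, hvb, d', hd'⟩ := (Walk.not_nil_iff).mp (Walk.not_nil_of_ne (Ne.symm hyv) :
      ¬ d.Nil)
  have hteq : t = (Walk.cons hva r).reverse := by rw [← hr, Walk.reverse_reverse]
  have hlt' : t.length = r.length + 1 := by
    rw [hteq]; simp [Walk.length_reverse]
  have hld : d.length = d'.length + 1 := by rw [hd']; simp
  have hklen : p.length = r.length + d'.length + 2 := by
    rw [← hspec, Walk.length_append, hlt', hld]; omega
  have htsup : t.support = (v :: r.support).reverse := by
    rw [hteq, Walk.support_reverse]; simp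
  have hdsup : d.support = v :: d'.support := by rw [hd']; simp
  have hvr : v ∉ r.support := by
    have h1 := ht.support_nodup
    rw [htsup, List.nodup_reverse, List.nodup_cons] at h1
    exact h1.1
  have hvd' : v ∉ d'.support := by
    have h1 := hd.support_nodup
    rw [hdsup, List.nodup_cons] at h1
    exact h1.1
  have hnodup : (t.support ++ d.support.tail).Nodup := by
    rw [← Walk.support_append, hspec]; exact hpath.support_nodup
  have hat : a ∈ t.support := by rw [htsup]; simp [r.start_mem_support]
  have hbd : b ∈ d.support.tail := by rw [hdsup]; exact d'.start_mem_support
  have hab : a ≠ b := by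
    rintro rfl
    exact (List.disjoint_of_nodup_append hnodup) hat hbd
  have hnadj : ¬ G.Adj a b := by
    intro hadj
    have hl : (r.reverse.append (Walk.cons hadj d')).length = r.length + d'.length + 1 := by
      simp [Walk.length_append, Walk.length_reverse]; omega
    have h2 := edist_le (r.reverse.append (Walk.cons hadj d'))
    rw [hl, ← hlen] at h2
    have h3 := Nat.cast_le.mp h2
    omega
  refine ⟨a, b, hab, hnadj, hva.symm, hvb.symm, ?_⟩
  intro w haw hbw
  by_contra hwv
  have hs : ∀ c ∈ (r.reverse.append (Walk.cons haw (Walk.cons hbw.symm d'))).support,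
      c ∈ ({v}ᶜ : Set V) := by
    intro c hc
    rw [Walk.support_append] at hc
    simp only [Walk.support_reverse, Walk.support_cons, List.tail_cons, List.mem_append,
      List.mem_reverse, List.mem_cons] at hc
    simp only [Set.mem_compl_iff, Set.mem_singleton_iff]
    rintro rfl
    rcases hc with h | h | h
    · exact hvr h
    · exact hwv h.symm
    · exact hvd' h
  obtain ⟨q, hq⟩ := walk_toInduce _ hs
  have hql : (r.reverse.append (Walk.cons haw (Walk.cons hbw.symm d'))).length
      = p.length := by
    simp [Walk.length_append, Walk.length_reverse, hklen]; omega
  have hle2 : (G.induce ({v}ᶜ : Set V)).edist x y ≤ (p.length : ℕ∞) := by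
    have h2 := edist_le q
    rwa [hq, hql] at h2
  rw [hlen] at hle2
  exact absurd (hle2.trans_lt hlt) (lt_irrefl _)

lemma det_pair_witness {V : Type*} {G : SimpleGraph V} {v a b : V}
    (h : IsDeterminingPair G v a b) :
    ∃ x y : ({v}ᶜ : Set V),
      (G.induce ({v}ᶜ : Set V)).edist x y ≠ G.edist (x : V) (y : V) := by
  obtain ⟨hab, hnadj, hav, hbv, huniq⟩ := h
  have ha : a ∈ ({v}ᶜ : Set V) := by simpa using hav.ne
  have hb : b ∈ ({v}ᶜ : Set V) := by simpa using hbv.ne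
  refine ⟨⟨a, ha⟩, ⟨b, hb⟩, ?_⟩
  have h2 : G.edist a b = 2 := by
    have hle : G.edist a b ≤ 2 := by
      have := edist_le (Walk.cons hav (Walk.cons hbv.symm Walk.nil))
      simpa using this
    have h0 : G.edist a b ≠ 0 := by simpa [edist_eq_zero_iff] using hab
    have h1 : G.edist a b ≠ 1 := by simpa [edist_eq_one_iff_adj] using hnadj
    rcases eq_or_ne (G.edist a b) ⊤ with ht | ht
    · rw [ht] at hle; exact absurd hle (by simp)
    · lift G.edist a b to ℕ using ht with n hn
      have hle' : n ≤ 2 := by exact_mod_cast hle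
      have h0' : n ≠ 0 := by exact_mod_cast h0
      have h1' : n ≠ 1 := by exact_mod_cast h1
      have : n = 2 := by omega
      exact_mod_cast this
  have key : (G.induce ({v}ᶜ : Set V)).edist ⟨a, ha⟩ ⟨b, hb⟩ ≠ 2 := by
    intro heq
    obtain ⟨q, hq⟩ := exists_walk_of_edist_ne_top
      (show (G.induce ({v}ᶜ : Set V)).edist ⟨a, ha⟩ ⟨b, hb⟩ ≠ ⊤ by rw [heq]; simp)
    rw [heq] at hq
    have hq2 : q.length = 2 := by exact_mod_cast hq
    have h01 : (G.induce ({v}ᶜ : Set V)).Adj ⟨a, ha⟩ (q.getVert 1) := by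
      have := q.adj_getVert_succ (i := 0) (by omega)
      rwa [Walk.getVert_zero] at this
    have h12 : (G.induce ({v}ᶜ : Set V)).Adj (q.getVert 1) ⟨b, hb⟩ := by
      have := q.adj_getVert_succ (i := 1) (by omega)
      rwa [show 1 + 1 = q.length from by omega, Walk.getVert_length] at this
    have hAm : G.Adj a ((q.getVert 1 : ({v}ᶜ : Set V)) : V) := h01
    have hBm : G.Adj b ((q.getVert 1 : ({v}ᶜ : Set V)) : V) := h12.symm
    exact (q.getVert 1).2 (by simpa using huniq _ hAm hBm)
  exact fun heq => key (heq.trans h2)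

theorem stmt_12 {α β : Type*} [Fintype α] [Fintype β]
    (G : SimpleGraph α) (H : SimpleGraph β)
    (hG : IsDistanceCritical G) (hH : IsDistanceCritical H) :
    IsDistanceCritical (strongProd G H) ∧
      ∀ p : α × β, ∃ a b : α × β, IsDeterminingPair (strongProd G H) p a b := by
  have part2 : ∀ p : α × β, ∃ a b : α × β, IsDeterminingPair (strongProd G H) p a b := by
    rintro ⟨u, w⟩
    obtain ⟨a, b, hab, hnab, hau, hbu, huu⟩ := exists_det_pair (hG u)
    obtain ⟨c, d, hcd, hncd, hcw, hdw, huw⟩ := exists_det_pair (hH w)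
    refine ⟨(a, c), (b, d), ?_, ?_, ?_, ?_, ?_⟩
    · exact fun h => hab (congrArg Prod.fst h)
    · rintro ⟨-, h1, -⟩
      rcases h1 with h | h
      · exact hab h
      · exact hnab h
    · exact ⟨fun h => hau.ne (congrArg Prod.fst h), Or.inr hau, Or.inr hcw⟩
    · exact ⟨fun h => hbu.ne (congrArg Prod.fst h), Or.inr hbu, Or.inr hdw⟩
    · rintro ⟨z1, z2⟩ ⟨-, ha1, ha2⟩ ⟨-, hb1, hb2⟩
      have hz1 : z1 = u := by
        rcases ha1 with rfl | ha1
        · rcases hb1 with h | h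
          · exact absurd h.symm hab
          · exact absurd h.symm hnab
        · rcases hb1 with rfl | hb1
          · exact absurd ha1 hnab
          · exact huu z1 ha1 hb1
      have hz2 : z2 = w := by
        rcases ha2 with rfl | ha2
        · rcases hb2 with h | h
          · exact absurd h.symm hcd
          · exact absurd h.symm hncd
        · rcases hb2 with rfl | hb2
          · exact absurd ha2 hncd
          · exact huw z2 ha2 hb2
      exact Prod.ext hz1 hz2
  refine ⟨?_, part2⟩
  intro v
  obtain ⟨a, b, h⟩ := part2 v
  exact det_pair_witness h
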